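/- First reduction formula, case r = 1, m = 1. Let p ≤ q be nonnegative integers, α_1,…,α_p complex, β_1,…,β_q complex with no β_i a nonpositive integer; let a, b, c, f be complex with c not a nonpositive integer, f not a nonpositive integer, c − a − 1 ≠ 0, c − b − 1 ≠ 0, and set η = (c−a−1)(c−b−1) f / ( ab + (c−a−b−1) f ) (assumed well defined and not a nonpositive integer). Then for |x| < 1, Σ_{i=0}^{∞} Σ_{n=0}^{∞} [ Π_{l=1}^{p} (α_l)_{i+n} / Π_{l=1}^{q} (β_l)_{i+n} ] · (a)_i (b)_i (f+1)_i (c−a−b−1)_n x^{i+n} / ( (c)_i (f)_i i! n! ) = Σ_{n=0}^{∞} [ Π_{l=1}^{p} (α_l)_n / Π_{l=1}^{q} (β_l)_n ] · (c−a−1)_n (c−b−1)_n (η+1)_n x^n / ( (c)_n (η)_n n! ). -/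

import Mathlib

open Finset

/-- Pochhammer symbol `(a)ₖ = a(a+1)⋯(a+k−1)` for complex `a`. -/
noncomputable def poch (a : ℂ) (k : ℕ) : ℂ := ∏ i ∈ Finset.range k, (a + i)

lemma poch_zero (a : ℂ) : poch a 0 = 1 := by simp [poch]

lemma poch_succ (a : ℂ) (k : ℕ) : poch a (k+1) = poch a k * (a + k) :=
  Finset.prod_range_succ _ _

lemma poch_succ' (a : ℂ) (k : ℕ) : poch a (k+1) = a * poch (a+1) k := by
  rw [poch, Finset.prod_range_succ']
  simp only [Nat.cast_zero, add_zero]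
  rw [mul_comm, poch]
  congr 1
  exact Finset.prod_congr rfl (fun i _ => by push_cast; ring)

lemma poch_add (a : ℂ) (i m : ℕ) : poch a (i+m) = poch a i * poch (a+i) m := by
  rw [poch, Finset.prod_range_add]
  congr 1
  exact Finset.prod_congr rfl (fun k _ => by push_cast; ring)

lemma poch_one_eq_factorial (k : ℕ) : poch 1 k = (k.factorial : ℂ) := by
  induction k with
  | zero => simp [poch]
  | succ n ih => rw [poch_succ, ih, Nat.factorial_succ]; push_cast; ring

lemma poch_ne_zero {β : ℂ} (h : ∀ k : ℕ, β ≠ -(k : ℂ)) (k : ℕ) : poch β k ≠ 0 := by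
  rw [poch]
  apply Finset.prod_ne_zero_iff.mpr
  intro i _
  intro hz
  exact h i (by linear_combination hz)

lemma poch_shift (d : ℂ) (k : ℕ) :
    poch d k = poch (d+1) k - (k : ℂ) * poch (d+1) (k-1) := by
  cases k with
  | zero => simp [poch_zero]
  | succ n =>
    rw [Nat.add_sub_cancel, poch_succ' d n, poch_succ (d+1) n]
    push_cast; ring

noncomputable def Vsum (N : ℕ) (A B C : ℂ) : ℂ :=
  ∑ i ∈ Finset.range (N+1),
    (N.choose i : ℂ) * (poch A i * poch B i * poch (C-A-B) (N-i) * poch (C+i) (N-i))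

lemma sub_mul_choose (M i : ℕ) (h : i ≤ M) :
    (M + 1 - i) * (M+1).choose i = (M+1) * M.choose i := by
  have h1 := Nat.choose_mul_factorial_mul_factorial (Nat.le_succ_of_le h)
  have h2 := Nat.choose_mul_factorial_mul_factorial h
  have h3 : (M + 1 - i) = (M - i) + 1 := by omega
  have h4 : ((M-i)+1).factorial = ((M-i)+1) * (M-i).factorial := Nat.factorial_succ _
  have hpos : 0 < i.factorial * (M-i).factorial :=
    Nat.mul_pos i.factorial_pos (Nat.factorial_pos _)
  apply Nat.eq_of_mul_eq_mul_right hpos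
  calc (M + 1 - i) * (M+1).choose i * (i.factorial * (M-i).factorial)
      = (M+1).choose i * i.factorial * ((M+1)-i).factorial := by
        rw [h3, h4]; ring
    _ = (M+1).factorial := h1
    _ = (M+1) * M.factorial := Nat.factorial_succ _
    _ = (M+1) * (M.choose i * i.factorial * (M-i).factorial) := by rw [h2]
    _ = (M+1) * M.choose i * (i.factorial * (M-i).factorial) := by ring

lemma Vsum_eq (N : ℕ) : ∀ A B C : ℂ, Vsum N A B C = poch (C-A) N * poch (C-B) N := by
  induction N using Nat.strong_induction_on with
  | _ N ih =>
    match N with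
    | 0 => intro A B C; simp [Vsum, poch_zero]
    | 1 =>
      intro A B C
      simp only [Vsum]
      rw [Finset.sum_range_succ, Finset.sum_range_succ, Finset.sum_range_zero]
      norm_num [poch_zero, poch_succ, poch]
      ring
    | (M+2) =>
      intro A B C
      set K := M + 1 with hK
      -- abbreviations
      set E := C - A - B with hE
      have key : ∀ i ∈ Finset.range (K+1),
          ((K.choose i : ℂ)) *
            ((poch A i * poch B i * poch E (K+1-i) * poch (C+i) (K+1-i))
             + (poch A (i+1) * poch B (i+1) * poch E (K-i) * poch (C+(i+1 : ℕ)) (K-i)))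
          = (K.choose i : ℂ) * ((C+K)*K * (poch A i * poch B i * poch E (K-i) * poch (C+i) (K-i))
              + (C-A)*(C-B) * (poch A i * poch B i * poch E (K-i) * poch ((C+i)+1) (K-i))) := by
        intro i hi
        rw [Finset.mem_range] at hi
        have hiK : i ≤ K := by omega
        set k := K - i with hk
        have h2 : K + 1 - i = k + 1 := by omega
        have hKik : (K : ℂ) = (i : ℂ) + (k : ℂ) := by
          have : K = i + k := by omega
          rw [this]; push_cast; ring
        rw [h2]
        have hCi1 : (C + ((i:ℕ)+1 : ℕ) : ℂ) = (C + i) + 1 := by push_cast; ring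
        rw [hCi1, poch_succ A i, poch_succ B i, poch_succ E k, poch_succ' (C+i) k]
        have h1 : poch (C+i) k * ((C+i) + k) = (C+i) * poch ((C+i)+1) k :=
          (poch_succ (C+i) k).symm.trans (poch_succ' (C+i) k)
        rw [hKik]
        linear_combination (-((K.choose i : ℂ)) * (poch A i * poch B i * poch E k * ((i:ℂ)+(k:ℂ)))) * h1
      -- Step A : Pascal splitting
      have stepA : Vsum (K+1) A B C
          = ∑ i ∈ Finset.range (K+1), ((K.choose i : ℂ)) *
              ((poch A i * poch B i * poch E (K+1-i) * poch (C+i) (K+1-i))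
               + (poch A (i+1) * poch B (i+1) * poch E (K-i) * poch (C+(i+1 : ℕ)) (K-i))) := by
        rw [Vsum, Finset.sum_range_succ']
        have e1 : ∀ i ∈ Finset.range (K+1),
            (((K+1).choose (i+1) : ℂ)) *
              (poch A (i+1) * poch B (i+1) * poch (C-A-B) (K+1-(i+1)) * poch (C+(i+1:ℕ)) (K+1-(i+1)))
            = ((K.choose i : ℂ)) * (poch A (i+1) * poch B (i+1) * poch E (K-i) * poch (C+(i+1:ℕ)) (K-i))
              + ((K.choose (i+1) : ℂ)) * (poch A (i+1) * poch B (i+1) * poch E (K+1-(i+1)) * poch (C+(i+1:ℕ)) (K+1-(i+1))) := by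
          intro i hi
          have h3 : K + 1 - (i+1) = K - i := by omega
          rw [h3, Nat.choose_succ_succ, ← hE]
          push_cast
          ring
        rw [Finset.sum_congr rfl e1, Finset.sum_add_distrib]
        have e2 : ∑ i ∈ Finset.range (K+1),
              ((K.choose (i+1) : ℂ)) * (poch A (i+1) * poch B (i+1) * poch E (K+1-(i+1)) * poch (C+(i+1:ℕ)) (K+1-(i+1)))
            + (((K+1).choose 0 : ℂ)) * (poch A 0 * poch B 0 * poch (C-A-B) (K+1-0) * poch (C+(0:ℕ)) (K+1-0))
          = ∑ i ∈ Finset.range (K+1),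
              ((K.choose i : ℂ)) * (poch A i * poch B i * poch E (K+1-i) * poch (C+i) (K+1-i)) := by
          have e3 : (∑ i ∈ Finset.range (K+2),
              ((K.choose i : ℂ)) * (poch A i * poch B i * poch E (K+1-i) * poch (C+i) (K+1-i)))
            = ∑ i ∈ Finset.range (K+1),
              ((K.choose i : ℂ)) * (poch A i * poch B i * poch E (K+1-i) * poch (C+i) (K+1-i)) := by
            rw [Finset.sum_range_succ, Nat.choose_succ_self]
            simp
          rw [← e3, Finset.sum_range_succ'
            (fun i => ((K.choose i : ℂ)) * (poch A i * poch B i * poch E (K+1-i) * poch (C+i) (K+1-i))) (K+1)]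
          simp [hE]
        rw [add_assoc, e2]
        rw [← Finset.sum_add_distrib]
        apply Finset.sum_congr rfl
        intro i hi
        ring
      rw [stepA, Finset.sum_congr rfl key]
      -- split into two sums
      have split : ∑ i ∈ Finset.range (K+1),
            (K.choose i : ℂ) * ((C+K)*K * (poch A i * poch B i * poch E (K-i) * poch (C+i) (K-i))
              + (C-A)*(C-B) * (poch A i * poch B i * poch E (K-i) * poch ((C+i)+1) (K-i)))
          = (C+K)*K * Vsum K A B C
            + (C-A)*(C-B) * ∑ i ∈ Finset.range (K+1),
                (K.choose i : ℂ) * (poch A i * poch B i * poch E (K-i) * poch ((C+i)+1) (K-i)) := by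
        rw [Vsum, Finset.mul_sum, Finset.mul_sum, ← Finset.sum_add_distrib]
        apply Finset.sum_congr rfl
        intro i hi
        rw [← hE]
        ring
      rw [split]
      -- Step D : the W sum
      have stepD : ∑ i ∈ Finset.range (K+1),
            (K.choose i : ℂ) * (poch A i * poch B i * poch E (K-i) * poch ((C+i)+1) (K-i))
          = Vsum K A B (C+1) - (K:ℂ)*(C+K) * Vsum M A B (C+1) := by
        have e4 : ∀ i ∈ Finset.range (K+1),
            (K.choose i : ℂ) * (poch A i * poch B i * poch E (K-i) * poch ((C+i)+1) (K-i))
          = (K.choose i : ℂ) * (poch A i * poch B i * poch ((C+1)-A-B) (K-i) * poch ((C+1)+i) (K-i))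
            - (K.choose i : ℂ) * ((K-i : ℕ) : ℂ) *
              (poch A i * poch B i * poch (E+1) (K-i-1) * poch ((C+i)+1) (K-i)) := by
          intro i hi
          have e5 : (C+1)-A-B = E+1 := by rw [hE]; ring
          have e6 : (C+1)+(i:ℂ) = (C+i)+1 := by ring
          rw [e5, e6, poch_shift E (K-i)]
          ring
        rw [Finset.sum_congr rfl e4, Finset.sum_sub_distrib]
        have e7 : (∑ i ∈ Finset.range (K+1),
            (K.choose i : ℂ) * (poch A i * poch B i * poch ((C+1)-A-B) (K-i) * poch ((C+1)+i) (K-i)))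
          = Vsum K A B (C+1) := rfl
        rw [e7]
        congr 1
        -- the shifted sum
        rw [Finset.sum_range_succ]
        have e8 : ((K - K : ℕ) : ℂ) = 0 := by
          rw [Nat.sub_self]; simp
        rw [e8]
        have e9 : ∀ i ∈ Finset.range (M+1),
            (K.choose i : ℂ) * ((K-i : ℕ) : ℂ) *
              (poch A i * poch B i * poch (E+1) (K-i-1) * poch ((C+i)+1) (K-i))
          = (K:ℂ)*(C+K) * ((M.choose i : ℂ) *
              (poch A i * poch B i * poch ((C+1)-A-B) (M-i) * poch ((C+1)+i) (M-i))) := by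
          intro i hi
          rw [Finset.mem_range] at hi
          have hiM : i ≤ M := by omega
          rw [hK]
          have h10 : M + 1 - i - 1 = M - i := by omega
          have h11 : M + 1 - i = (M - i) + 1 := by omega
          rw [h10, h11, poch_succ ((C+i)+1) (M-i)]
          have e5 : (C+1)-A-B = E+1 := by rw [hE]; ring
          have e6 : (C+1)+(i:ℂ) = (C+i)+1 := by ring
          rw [e5, e6]
          have h15 : ((C+i)+1) + ((M-i : ℕ) : ℂ) = C + ((M+1 : ℕ) : ℂ) := by
            push_cast [Nat.cast_sub hiM]; ring
          rw [h15]
          have h := sub_mul_choose M i hiM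
          rw [h11] at h
          have h13 : (((M - i) + 1 : ℕ) : ℂ) * ((M+1).choose i : ℂ)
              = ((M+1 : ℕ) : ℂ) * (M.choose i : ℂ) := by
            exact_mod_cast congrArg (Nat.cast (R := ℂ)) h
          linear_combination (poch A i * poch B i * poch (E+1) (M-i) * poch ((C+(i:ℂ))+1) (M-i) * (C+((M+1:ℕ):ℂ))) * h13
        rw [Finset.sum_congr rfl e9, ← Finset.mul_sum]
        rw [Vsum]
        simp
      rw [stepD]
      -- Step E : final algebra using the induction hypotheses
      have ihK := ih K (by omega) A B C
      have ihK1 := ih K (by omega) A B (C+1)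
      have ihM1 := ih M (by omega) A B (C+1)
      rw [ihK, ihK1, ihM1]
      have pA1 : poch (C-A) K = (C-A) * poch (C-A+1) M := by rw [hK, poch_succ']
      have pB1 : poch (C-B) K = (C-B) * poch (C-B+1) M := by rw [hK, poch_succ']
      have pA2 : poch (C+1-A) K = poch (C-A+1) M * ((C-A+1) + M) := by
        have : C+1-A = C-A+1 := by ring
        rw [this, hK, poch_succ]
      have pB2 : poch (C+1-B) K = poch (C-B+1) M * ((C-B+1) + M) := by
        have : C+1-B = C-B+1 := by ring
        rw [this, hK, poch_succ]
      have pA3 : poch (C+1-A) M = poch (C-A+1) M := by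
        have : C+1-A = C-A+1 := by ring
        rw [this]
      have pB3 : poch (C+1-B) M = poch (C-B+1) M := by
        have : C+1-B = C-B+1 := by ring
        rw [this]
      have pA4 : poch (C-A) (M+2) = (C-A) * (poch (C-A+1) M * ((C-A+1) + M)) := by
        rw [poch_succ', poch_succ]
      have pB4 : poch (C-B) (M+2) = (C-B) * (poch (C-B+1) M * ((C-B+1) + M)) := by
        rw [poch_succ', poch_succ]
      rw [pA1, pB1, pA2, pB2, pA3, pB3, pA4, pB4, hK]
      push_cast
      ring

lemma lemI (N : ℕ) (a b c : ℂ) :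
    ∑ i ∈ Finset.range (N+1), (N.choose i : ℂ) *
      (poch a i * poch b i * poch (c-a-b-1) (N-i) * poch (c+i) (N-i))
    = poch (c-a-1) N * poch (c-b-1) N
      + (N : ℂ) * (c-a-b-1) * poch (c-a) (N-1) * poch (c-b) (N-1) := by
  cases N with
  | zero => simp [poch_zero]
  | succ M =>
    have e1 : ∀ i ∈ Finset.range (M+2), (((M+1).choose i : ℂ)) *
        (poch a i * poch b i * poch (c-a-b-1) (M+1-i) * poch (c+i) (M+1-i))
      = ((M+1).choose i : ℂ) * (poch a i * poch b i * poch (c-a-b) (M+1-i) * poch (c+i) (M+1-i))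
        - ((M+1).choose i : ℂ) * ((M+1-i : ℕ) : ℂ) *
          (poch a i * poch b i * poch (c-a-b) (M+1-i-1) * poch (c+i) (M+1-i)) := by
      intro i hi
      rw [poch_shift (c-a-b-1) (M+1-i)]
      have e2 : c-a-b-1+1 = c-a-b := by ring
      rw [e2]
      ring
    rw [Finset.sum_congr rfl e1, Finset.sum_sub_distrib]
    have e3 : (∑ i ∈ Finset.range (M+2), ((M+1).choose i : ℂ) *
        (poch a i * poch b i * poch (c-a-b) (M+1-i) * poch (c+i) (M+1-i)))
        = poch (c-a) (M+1) * poch (c-b) (M+1) := by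
      rw [← Vsum_eq (M+1) a b c, Vsum]
    rw [e3]
    have e4 : (∑ i ∈ Finset.range (M+2), ((M+1).choose i : ℂ) * ((M+1-i : ℕ) : ℂ) *
        (poch a i * poch b i * poch (c-a-b) (M+1-i-1) * poch (c+i) (M+1-i)))
        = ((M+1 : ℕ) : ℂ) * (c + M) * (poch (c-a) M * poch (c-b) M) := by
      rw [Finset.sum_range_succ]
      have e5 : ((M+1-(M+1) : ℕ) : ℂ) = 0 := by norm_num
      rw [e5]
      have e6 : ∀ i ∈ Finset.range (M+1), ((M+1).choose i : ℂ) * ((M+1-i : ℕ) : ℂ) *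
          (poch a i * poch b i * poch (c-a-b) (M+1-i-1) * poch (c+i) (M+1-i))
        = ((M+1 : ℕ) : ℂ) * (c + M) * ((M.choose i : ℂ) *
            (poch a i * poch b i * poch ((c)-a-b) (M-i) * poch (c+i) (M-i))) := by
        intro i hi
        rw [Finset.mem_range] at hi
        have hiM : i ≤ M := by omega
        have h10 : M + 1 - i - 1 = M - i := by omega
        have h11 : M + 1 - i = (M - i) + 1 := by omega
        rw [h10, h11, poch_succ (c+i) (M-i)]
        have h15 : (c+i) + ((M-i : ℕ) : ℂ) = c + (M : ℂ) := by
          push_cast [Nat.cast_sub hiM]; ring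
        rw [h15]
        have h := sub_mul_choose M i hiM
        rw [h11] at h
        have h13 : (((M - i) + 1 : ℕ) : ℂ) * ((M+1).choose i : ℂ)
            = ((M+1 : ℕ) : ℂ) * (M.choose i : ℂ) := by
          exact_mod_cast congrArg (Nat.cast (R := ℂ)) h
        linear_combination (poch a i * poch b i * poch (c-a-b) (M-i) * poch (c+(i:ℂ)) (M-i) * (c+(M:ℂ))) * h13
      rw [Finset.sum_congr rfl e6, ← Finset.mul_sum]
      have e7 : (∑ i ∈ Finset.range (M+1), (M.choose i : ℂ) *
          (poch a i * poch b i * poch (c-a-b) (M-i) * poch (c+i) (M-i)))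
          = poch (c-a) M * poch (c-b) M := by
        have := Vsum_eq M a b c
        rw [Vsum] at this
        exact this
      rw [e7]
      ring
    rw [e4]
    -- final algebra
    have p1 : poch (c-a-1) (M+1) = (c-a-1) * poch (c-a) M := by
      rw [poch_succ']
      have : c-a-1+1 = c-a := by ring
      rw [this]
    have p2 : poch (c-b-1) (M+1) = (c-b-1) * poch (c-b) M := by
      rw [poch_succ']
      have : c-b-1+1 = c-b := by ring
      rw [this]
    have p3 : poch (c-a) (M+1) = poch (c-a) M * (c-a+M) := poch_succ _ _
    have p4 : poch (c-b) (M+1) = poch (c-b) M * (c-b+M) := poch_succ _ _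
    have hM1 : M + 1 - 1 = M := by omega
    rw [p1, p2, p3, p4, hM1]
    push_cast
    ring

lemma lemII (N : ℕ) (a b c : ℂ) :
    ∑ i ∈ Finset.range (N+1), (N.choose i : ℂ) * (i : ℂ) *
      (poch a i * poch b i * poch (c-a-b-1) (N-i) * poch (c+i) (N-i))
    = (N : ℂ) * a * b * poch (c-a) (N-1) * poch (c-b) (N-1) := by
  cases N with
  | zero => simp
  | succ M =>
    rw [Finset.sum_range_succ']
    have e1 : ∀ i ∈ Finset.range (M+1), (((M+1).choose (i+1) : ℂ)) * ((i+1 : ℕ) : ℂ) *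
        (poch a (i+1) * poch b (i+1) * poch (c-a-b-1) (M+1-(i+1)) * poch (c+((i+1:ℕ))) (M+1-(i+1)))
      = ((M+1 : ℕ) : ℂ) * a * b * ((M.choose i : ℂ) *
          (poch (a+1) i * poch (b+1) i * poch ((c+1)-(a+1)-(b+1)) (M-i) * poch ((c+1)+i) (M-i))) := by
      intro i hi
      have h3 : M + 1 - (i+1) = M - i := by omega
      rw [h3, poch_succ' a i, poch_succ' b i]
      have e2 : (c+1)-(a+1)-(b+1) = c-a-b-1 := by ring
      have e3 : (c + ((i+1 : ℕ)) : ℂ) = (c+1) + (i : ℂ) := by push_cast; ring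
      rw [e2, e3]
      have h := Nat.add_one_mul_choose_eq M i
      have h13 : ((M+1 : ℕ) : ℂ) * (M.choose i : ℂ)
          = (((M+1).choose (i+1) : ℕ) : ℂ) * ((i+1 : ℕ) : ℂ) := by
        exact_mod_cast congrArg (Nat.cast (R := ℂ)) h
      linear_combination (a * poch (a+1) i * (b * poch (b+1) i) * poch (c-a-b-1) (M-i) * poch ((c+1)+(i:ℂ)) (M-i)) * h13.symm
    rw [Finset.sum_congr rfl e1, ← Finset.mul_sum]
    have e7 : (∑ i ∈ Finset.range (M+1), (M.choose i : ℂ) *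
        (poch (a+1) i * poch (b+1) i * poch ((c+1)-(a+1)-(b+1)) (M-i) * poch ((c+1)+i) (M-i)))
        = poch (c-a) M * poch (c-b) M := by
      have := Vsum_eq M (a+1) (b+1) (c+1)
      rw [Vsum] at this
      rw [this]
      have q1 : (c+1)-(a+1) = c-a := by ring
      have q2 : (c+1)-(b+1) = c-b := by ring
      rw [q1, q2]
    rw [e7]
    have hM1 : M + 1 - 1 = M := by omega
    rw [hM1]
    push_cast
    ring

lemma lemKEY (N : ℕ) (a b c f : ℂ) :
    ∑ i ∈ Finset.range (N+1), (N.choose i : ℂ) *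
      (poch a i * poch b i * (f + i) * poch (c-a-b-1) (N-i) * poch (c+i) (N-i))
    = f * poch (c-a-1) N * poch (c-b-1) N
      + (N : ℂ) * (a*b + (c-a-b-1)*f) * poch (c-a) (N-1) * poch (c-b) (N-1) := by
  have split : ∀ i ∈ Finset.range (N+1), (N.choose i : ℂ) *
      (poch a i * poch b i * (f + i) * poch (c-a-b-1) (N-i) * poch (c+i) (N-i))
    = f * ((N.choose i : ℂ) * (poch a i * poch b i * poch (c-a-b-1) (N-i) * poch (c+i) (N-i)))
      + (N.choose i : ℂ) * (i : ℂ) *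
        (poch a i * poch b i * poch (c-a-b-1) (N-i) * poch (c+i) (N-i)) := by
    intro i hi; ring
  rw [Finset.sum_congr rfl split, Finset.sum_add_distrib, ← Finset.mul_sum, lemI, lemII]
  ring

lemma lemStar (a b c f η : ℂ)
    (hc : ∀ k : ℕ, c ≠ -(k : ℂ)) (hf : ∀ k : ℕ, f ≠ -(k : ℂ))
    (hη' : ∀ k : ℕ, η ≠ -(k : ℂ))
    (hden : a * b + (c - a - b - 1) * f ≠ 0)
    (hη : η = (c - a - 1) * (c - b - 1) * f / (a * b + (c - a - b - 1) * f))
    (N : ℕ) :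
    ∑ i ∈ Finset.range (N+1),
      poch a i * poch b i * poch (f+1) i * poch (c-a-b-1) (N-i) /
        (poch c i * poch f i * (i.factorial : ℂ) * ((N-i).factorial : ℂ))
    = poch (c-a-1) N * poch (c-b-1) N * poch (η+1) N /
        (poch c N * poch η N * (N.factorial : ℂ)) := by
  have f0 : f ≠ 0 := by have := hf 0; simpa using this
  have η0 : η ≠ 0 := by have := hη' 0; simpa using this
  have factC : ∀ m : ℕ, ((m.factorial : ℂ)) ≠ 0 := fun m => by
    exact_mod_cast m.factorial_ne_zero
  have e1 : ∀ i ∈ Finset.range (N+1),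
      poch a i * poch b i * poch (f+1) i * poch (c-a-b-1) (N-i) /
        (poch c i * poch f i * (i.factorial : ℂ) * ((N-i).factorial : ℂ))
    = (N.choose i : ℂ) *
        (poch a i * poch b i * (f + i) * poch (c-a-b-1) (N-i) * poch (c+i) (N-i)) /
        (f * poch c N * (N.factorial : ℂ)) := by
    intro i hi
    rw [Finset.mem_range] at hi
    have hiN : i ≤ N := by omega
    have d1 : poch c i * poch f i * (i.factorial : ℂ) * ((N-i).factorial : ℂ) ≠ 0 :=
      mul_ne_zero (mul_ne_zero (mul_ne_zero (poch_ne_zero hc i) (poch_ne_zero hf i)) (factC i)) (factC (N-i))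
    have d2 : f * poch c N * (N.factorial : ℂ) ≠ 0 :=
      mul_ne_zero (mul_ne_zero f0 (poch_ne_zero hc N)) (factC N)
    rw [div_eq_div_iff d1 d2]
    have hA : f * poch (f+1) i = poch f i * (f + i) :=
      (poch_succ' f i).symm.trans (poch_succ f i)
    have hB : poch c N = poch c i * poch (c+i) (N-i) := by
      have h : i + (N-i) = N := by omega
      have hb := poch_add c i (N-i)
      rw [h] at hb
      exact hb
    have hC : ((N.choose i : ℂ)) * (i.factorial : ℂ) * ((N-i).factorial : ℂ)
        = (N.factorial : ℂ) := by
      exact_mod_cast congrArg (Nat.cast (R := ℂ)) (Nat.choose_mul_factorial_mul_factorial hiN)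
    rw [hB, ← hC]
    linear_combination (poch a i * poch b i * poch (c-a-b-1) (N-i) *
      (poch c i * poch (c+i) (N-i)) * ((N.choose i : ℂ) * (i.factorial : ℂ) * ((N-i).factorial : ℂ))) * hA
  rw [Finset.sum_congr rfl e1, ← Finset.sum_div, lemKEY]
  have key2 : (f * poch (c-a-1) N * poch (c-b-1) N
      + (N : ℂ) * (a*b + (c-a-b-1)*f) * poch (c-a) (N-1) * poch (c-b) (N-1)) * poch η N
      = poch (c-a-1) N * poch (c-b-1) N * poch (η+1) N * f := by
    cases N with
    | zero => simp [poch_zero]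
    | succ M =>
      have hM1 : M + 1 - 1 = M := by omega
      rw [hM1]
      have hQ : η * (a*b + (c-a-b-1)*f) = (c-a-1)*(c-b-1)*f := by
        rw [hη]; exact div_mul_cancel₀ _ hden
      have hrel : η * poch (η+1) (M+1) = poch η (M+1) * (η + ((M+1 : ℕ) : ℂ)) :=
        (poch_succ' η (M+1)).symm.trans (poch_succ η (M+1))
      have p1 : poch (c-a-1) (M+1) = (c-a-1) * poch (c-a) M := by
        rw [poch_succ']
        have : c-a-1+1 = c-a := by ring
        rw [this]
      have p2 : poch (c-b-1) (M+1) = (c-b-1) * poch (c-b) M := by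
        rw [poch_succ']
        have : c-b-1+1 = c-b := by ring
        rw [this]
      apply mul_left_cancel₀ η0
      rw [p1, p2]
      push_cast at hrel ⊢
      linear_combination (((M:ℂ)+1) * poch (c-a) M * poch (c-b) M * poch η (M+1)) * hQ
        - ((c-a-1)*(c-b-1)*poch (c-a) M * poch (c-b) M * f) * hrel
  rw [div_eq_div_iff
    (mul_ne_zero (mul_ne_zero f0 (poch_ne_zero hc N)) (factC N))
    (mul_ne_zero (mul_ne_zero (poch_ne_zero hc N) (poch_ne_zero hη' N)) (factC N))]
  linear_combination (poch c N * (N.factorial : ℂ)) * key2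

lemma one_not_negnat : ∀ k : ℕ, (1:ℂ) ≠ -(k:ℂ) := by
  intro k h
  have h2 := congrArg Complex.re h
  simp at h2
  have : (0:ℝ) ≤ (k:ℝ) := Nat.cast_nonneg k
  linarith

lemma poch_linear_lower (β : ℂ) (h : ∀ k : ℕ, β ≠ -(k:ℂ)) :
    ∃ ε : ℝ, 0 < ε ∧ ∀ i : ℕ, ε * ((i:ℝ)+1) ≤ ‖β + (i:ℂ)‖ := by
  set I := ⌈2 * ‖β‖⌉₊ + 1 with hI
  have hne : (Finset.range I).Nonempty := ⟨0, by simp [hI]⟩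
  set ε₁ := (Finset.range I).inf' hne (fun i => ‖β + (i:ℂ)‖ / ((i:ℝ)+1)) with hε₁
  refine ⟨min ε₁ 4⁻¹, ?_, ?_⟩
  · apply lt_min
    · rw [Finset.lt_inf'_iff]
      intro i _
      apply div_pos
      · have hz : β + i ≠ 0 := fun hz => h i (by linear_combination hz)
        exact norm_pos_iff.mpr hz
      · positivity
    · norm_num
  · intro i
    by_cases hi : i < I
    · have h1 : ε₁ ≤ ‖β + i‖ / ((i:ℝ)+1) :=
        Finset.inf'_le _ (Finset.mem_range.mpr hi)
      have hp : (0:ℝ) < (i:ℝ)+1 := by positivity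
      calc min ε₁ 4⁻¹ * ((i:ℝ)+1) ≤ (‖β + i‖ / ((i:ℝ)+1)) * ((i:ℝ)+1) :=
            mul_le_mul_of_nonneg_right (le_trans (min_le_left _ _) h1) (le_of_lt hp)
        _ = ‖β + i‖ := by field_simp
    · have hi' : I ≤ i := le_of_not_gt hi
      have hb : 2*‖β‖ ≤ (i:ℝ) := by
        have t1 := Nat.le_ceil (2*‖β‖)
        have t2 : (⌈2*‖β‖⌉₊ : ℝ) ≤ (i:ℝ) := by
          have : ⌈2*‖β‖⌉₊ ≤ i := by omega
          exact_mod_cast this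
        linarith
      have h1i : (1:ℝ) ≤ (i:ℝ) := by
        have : 1 ≤ i := by omega
        exact_mod_cast this
      have htr : (i:ℝ) - ‖β‖ ≤ ‖β + i‖ := by
        have hh : ‖(i:ℂ)‖ ≤ ‖β+i‖ + ‖β‖ := by
          have e : (i:ℂ) = (β+i) + (-β) := by ring
          calc ‖(i:ℂ)‖ = ‖(β+i) + (-β)‖ := by rw [← e]
            _ ≤ ‖β+i‖ + ‖-β‖ := norm_add_le _ _
            _ = ‖β+i‖ + ‖β‖ := by rw [norm_neg]
        have : ‖(i:ℂ)‖ = (i:ℝ) := Complex.norm_natCast i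
        linarith
      calc min ε₁ 4⁻¹ * ((i:ℝ)+1) ≤ 4⁻¹ * ((i:ℝ)+1) :=
            mul_le_mul_of_nonneg_right (min_le_right _ _) (by positivity)
        _ ≤ (i:ℝ) - ‖β‖ := by linarith
        _ ≤ ‖β+i‖ := htr

lemma bern_nat (m k : ℕ) : (k+1)^m * (k+m+1) ≤ (k+2)^m * (k+1) := by
  induction m with
  | zero => simp
  | succ m ih =>
    have step : (k+1)^m * (k+m+2) ≤ (k+2)^m * (k+2) := by
      have h1 : (k+1)^m * (k+m+2) = (k+1)^m * (k+m+1) + (k+1)^m := by ring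
      have h2 : (k+1)^m ≤ (k+2)^m := Nat.pow_le_pow_left (by omega) m
      calc (k+1)^m * (k+m+2) = (k+1)^m * (k+m+1) + (k+1)^m := h1
        _ ≤ (k+2)^m * (k+1) + (k+2)^m := Nat.add_le_add ih h2
        _ = (k+2)^m * (k+2) := by ring
    calc (k+1)^(m+1) * (k+(m+1)+1) = (k+1) * ((k+1)^m * (k+m+2)) := by ring
      _ ≤ (k+1) * ((k+2)^m * (k+2)) := Nat.mul_le_mul_left _ step
      _ = (k+2)^(m+1) * (k+1) := by ring

lemma prod_range_le (m : ℕ) : ∀ k : ℕ, (∏ i ∈ Finset.range k, (i+1+m)) ≤ (k+1)^m * k.factorial := by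
  intro k
  induction k with
  | zero => simp
  | succ k ih =>
    rw [Finset.prod_range_succ]
    calc (∏ i ∈ Finset.range k, (i+1+m)) * (k+1+m)
        ≤ ((k+1)^m * k.factorial) * (k+1+m) := Nat.mul_le_mul_right _ ih
      _ = ((k+1)^m * (k+m+1)) * k.factorial := by ring
      _ ≤ ((k+2)^m * (k+1)) * k.factorial := Nat.mul_le_mul_right _ (bern_nat m k)
      _ = (k+2)^m * (k+1).factorial := by rw [Nat.factorial_succ]; ring

lemma poch_ratio_poly (u v : ℂ) (hv : ∀ k : ℕ, v ≠ -(k:ℂ)) :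
    ∃ m : ℕ, ∀ k : ℕ, ‖poch u k‖ ≤ ((k:ℝ)+1)^m * ‖poch v k‖ := by
  obtain ⟨ε, hε, hlow⟩ := poch_linear_lower v hv
  refine ⟨⌈‖u - v‖ / ε⌉₊, fun k => ?_⟩
  set m := ⌈‖u - v‖/ε⌉₊ with hm
  have hfac : ∀ i : ℕ, ‖u + (i:ℂ)‖ * ((i:ℝ)+1) ≤ ‖v + (i:ℂ)‖ * (((i:ℝ)+1) + m) := by
    intro i
    have h1 : ‖u + i‖ ≤ ‖v + i‖ + ‖u - v‖ := by
      have e : u + (i:ℂ) = (v+i) + (u-v) := by ring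
      calc ‖u+(i:ℂ)‖ = ‖(v+i) + (u-v)‖ := by rw [← e]
        _ ≤ ‖v+i‖ + ‖u-v‖ := norm_add_le _ _
    have h2 : ‖u - v‖ ≤ (m:ℝ) * ε := by
      have := Nat.le_ceil (‖u-v‖/ε)
      rw [div_le_iff₀ hε] at this
      exact this
    have h3 : ε * ((i:ℝ)+1) ≤ ‖v+(i:ℂ)‖ := hlow i
    have h4 : (0:ℝ) ≤ (m:ℝ) := Nat.cast_nonneg m
    nlinarith [norm_nonneg (v+(i:ℂ)), norm_nonneg (u-v)]
  have hprod : (∏ i ∈ Finset.range k, (‖u + (i:ℂ)‖ * ((i:ℝ)+1)))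
      ≤ ∏ i ∈ Finset.range k, (‖v+(i:ℂ)‖ * (((i:ℝ)+1)+m)) :=
    Finset.prod_le_prod (fun i _ => by positivity) (fun i _ => hfac i)
  rw [Finset.prod_mul_distrib, Finset.prod_mul_distrib] at hprod
  have e1 : ∏ i ∈ Finset.range k, ‖u + (i:ℂ)‖ = ‖poch u k‖ := by
    rw [poch]; exact (norm_prod _ _).symm
  have e2 : ∏ i ∈ Finset.range k, ‖v + (i:ℂ)‖ = ‖poch v k‖ := by
    rw [poch]; exact (norm_prod _ _).symm
  have e3 : ∏ i ∈ Finset.range k, ((i:ℝ)+1) = (k.factorial : ℝ) := by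
    have : ∏ i ∈ Finset.range k, ((i:ℝ)+1) = ((∏ i ∈ Finset.range k, (i+1) : ℕ) : ℝ) := by
      rw [Nat.cast_prod]
      exact Finset.prod_congr rfl (fun i _ => by push_cast; ring)
    rw [this, Finset.prod_range_add_one_eq_factorial]
  have e4 : ∏ i ∈ Finset.range k, (((i:ℝ)+1)+(m:ℝ)) = ((∏ i ∈ Finset.range k, (i+1+m) : ℕ) : ℝ) := by
    rw [Nat.cast_prod]
    exact Finset.prod_congr rfl (fun i _ => by push_cast; ring)
  rw [e1, e2, e3, e4] at hprod
  have e5 : ((∏ i ∈ Finset.range k, (i+1+m) : ℕ) : ℝ) ≤ ((k+1)^m * k.factorial : ℕ) := by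
    exact_mod_cast prod_range_le m k
  have e6 : ‖poch u k‖ * (k.factorial : ℝ) ≤ (((k:ℝ)+1)^m * ‖poch v k‖) * (k.factorial : ℝ) := by
    calc ‖poch u k‖ * (k.factorial : ℝ) ≤ ‖poch v k‖ * ((∏ i ∈ Finset.range k, (i+1+m) : ℕ) : ℝ) := hprod
      _ ≤ ‖poch v k‖ * (((k+1)^m * k.factorial : ℕ) : ℝ) :=
          mul_le_mul_of_nonneg_left e5 (norm_nonneg _)
      _ = (((k:ℝ)+1)^m * ‖poch v k‖) * (k.factorial : ℝ) := by push_cast; ring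
  have hkf : (0:ℝ) < (k.factorial : ℝ) := by exact_mod_cast k.factorial_pos
  exact le_of_mul_le_mul_right e6 hkf

lemma summable_poly_geom (M : ℕ) {r : ℝ} (h0 : 0 ≤ r) (h1 : r < 1) :
    Summable fun n : ℕ => ((n:ℝ)+1)^M * r^n := by
  have hs : Summable fun n : ℕ => 2^M * r^n + 2^M * ((n:ℝ)^M * r^n) :=
    ((summable_geometric_of_lt_one h0 h1).mul_left _).add
      ((summable_pow_mul_geometric_of_norm_lt_one (R := ℝ) M
        (by rwa [Real.norm_eq_abs, abs_of_nonneg h0])).mul_left _)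
  apply hs.of_nonneg_of_le (fun n => by positivity)
  intro n
  have hb : ((n:ℝ)+1)^M ≤ 2^M + 2^M * (n:ℝ)^M := by
    rcases Nat.eq_zero_or_pos n with rfl | hn
    · have : (1:ℝ) ≤ 2^M := one_le_pow₀ (by norm_num)
      simp only [Nat.cast_zero, zero_add, one_pow]
      nlinarith [pow_nonneg (le_refl (0:ℝ)) M]
    · have h2 : ((n:ℝ)+1) ≤ 2*(n:ℝ) := by
        have : (1:ℝ) ≤ (n:ℝ) := by exact_mod_cast hn
        linarith
      calc ((n:ℝ)+1)^M ≤ (2*(n:ℝ))^M := pow_le_pow_left₀ (by positivity) h2 M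
        _ = 2^M * (n:ℝ)^M := mul_pow _ _ _
        _ ≤ 2^M + 2^M*(n:ℝ)^M := le_add_of_nonneg_left (by positivity)
  calc ((n:ℝ)+1)^M * r^n ≤ (2^M + 2^M*(n:ℝ)^M) * r^n :=
        mul_le_mul_of_nonneg_right hb (by positivity)
    _ = 2^M * r^n + 2^M * ((n:ℝ)^M * r^n) := by ring

lemma ratio_bound (p q : ℕ) (hpq : p ≤ q) (α : Fin p → ℂ) (β : Fin q → ℂ)
    (hβ : ∀ l, ∀ k : ℕ, β l ≠ -(k : ℂ)) :
    ∃ M : ℕ, ∀ k : ℕ, ‖∏ l, poch (α l) k‖ ≤ ((k:ℝ)+1)^M * ‖∏ l, poch (β l) k‖ := by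
  classical
  set ν : Fin q → ℂ := fun l => if h : (l:ℕ) < p then α ⟨l, h⟩ else 1 with hν
  choose m hmspec using fun l : Fin q => poch_ratio_poly (ν l) (β l) (hβ l)
  refine ⟨∑ l, m l, fun k => ?_⟩
  set g : ℕ → ℂ := fun j => poch (if h : j < p then α ⟨j,h⟩ else 1) k with hg
  have hsplit : (∏ l : Fin q, poch (ν l) k)
      = (∏ l : Fin p, poch (α l) k) * (poch 1 k)^(q-p) := by
    have s1 : (∏ l : Fin q, poch (ν l) k) = ∏ j ∈ Finset.range q, g j :=
      Fin.prod_univ_eq_prod_range (fun j => g j) q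
    have s2 : (∏ j ∈ Finset.range q, g j)
        = (∏ j ∈ Finset.range p, g j) * ∏ j ∈ Finset.range (q-p), g (p+j) := by
      have hq : p + (q-p) = q := by omega
      rw [← Finset.prod_range_add, hq]
    have s3 : (∏ j ∈ Finset.range p, g j) = ∏ l : Fin p, poch (α l) k := by
      rw [← Fin.prod_univ_eq_prod_range (fun j => g j) p]
      apply Finset.prod_congr rfl
      intro l _
      simp only [hg, dif_pos l.isLt]
    have s4 : (∏ j ∈ Finset.range (q-p), g (p+j)) = (poch 1 k)^(q-p) := by
      have hcon : ∀ j ∈ Finset.range (q-p), g (p+j) = poch 1 k := by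
        intro j _
        simp only [hg]
        rw [dif_neg (by omega : ¬ p+j < p)]
      rw [Finset.prod_congr rfl hcon, Finset.prod_const, Finset.card_range]
    rw [s1, s2, s3, s4]
  have h1 : ‖∏ l : Fin q, poch (ν l) k‖ ≤ ((k:ℝ)+1)^(∑ l, m l) * ‖∏ l, poch (β l) k‖ := by
    rw [norm_prod, norm_prod]
    calc (∏ l, ‖poch (ν l) k‖) ≤ ∏ l, (((k:ℝ)+1)^(m l) * ‖poch (β l) k‖) :=
        Finset.prod_le_prod (fun l _ => norm_nonneg _) (fun l _ => hmspec l k)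
      _ = (∏ l, ((k:ℝ)+1)^(m l)) * ∏ l, ‖poch (β l) k‖ := Finset.prod_mul_distrib
      _ = ((k:ℝ)+1)^(∑ l, m l) * ∏ l, ‖poch (β l) k‖ := by
          rw [Finset.prod_pow_eq_pow_sum]
  have h2 : ‖∏ l : Fin p, poch (α l) k‖ ≤ ‖∏ l : Fin q, poch (ν l) k‖ := by
    rw [hsplit, norm_mul, norm_pow, poch_one_eq_factorial, Complex.norm_natCast]
    have hf1 : (1:ℝ) ≤ (k.factorial:ℝ)^(q-p) :=
      one_le_pow₀ (by exact_mod_cast k.factorial_pos)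
    nlinarith [norm_nonneg (∏ l : Fin p, poch (α l) k)]
  exact h2.trans h1

set_option maxHeartbeats 1600000 in
/-- **First reduction formula for the Kampé de Fériet function, case r = 1, m = 1.** -/
theorem kampe_de_feriet_first_reduction_r1_m1
    (p q : ℕ) (hpq : p ≤ q) (α : Fin p → ℂ) (β : Fin q → ℂ)
    (hβ : ∀ l, ∀ k : ℕ, β l ≠ -(k : ℂ))
    (a b c f η : ℂ)
    (hc : ∀ k : ℕ, c ≠ -(k : ℂ)) (hf : ∀ k : ℕ, f ≠ -(k : ℂ))
    (hca : c - a - 1 ≠ 0) (hcb : c - b - 1 ≠ 0)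
    (hden : a * b + (c - a - b - 1) * f ≠ 0)
    (hη : η = (c - a - 1) * (c - b - 1) * f / (a * b + (c - a - b - 1) * f))
    (hη' : ∀ k : ℕ, η ≠ -(k : ℂ)) :
    ∀ x : ℂ, ‖x‖ < 1 →
      (∑' i : ℕ, ∑' n : ℕ,
        (∏ l, poch (α l) (i + n)) / (∏ l, poch (β l) (i + n)) *
          (poch a i * poch b i * poch (f + 1) i) * poch (c - a - b - 1) n * x ^ (i + n) /
            (poch c i * poch f i * (Nat.factorial i : ℂ) * (Nat.factorial n : ℂ)))
      = ∑' n : ℕ, (∏ l, poch (α l) n) / (∏ l, poch (β l) n) *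
          (poch (c - a - 1) n * poch (c - b - 1) n * poch (η + 1) n) * x ^ n /
            (poch c n * poch η n * (Nat.factorial n : ℂ)) := by
  intro x hx
  set T : ℕ × ℕ → ℂ := fun pr =>
    (∏ l, poch (α l) (pr.1 + pr.2)) / (∏ l, poch (β l) (pr.1 + pr.2)) *
      (poch a pr.1 * poch b pr.1 * poch (f + 1) pr.1) * poch (c - a - b - 1) pr.2 *
        x ^ (pr.1 + pr.2) /
      (poch c pr.1 * poch f pr.1 * (Nat.factorial pr.1 : ℂ) * (Nat.factorial pr.2 : ℂ)) with hT
  obtain ⟨M1, hM1⟩ := ratio_bound p q hpq α β hβ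
  obtain ⟨ma, hma⟩ := poch_ratio_poly a c hc
  obtain ⟨mb, hmb⟩ := poch_ratio_poly b f hf
  obtain ⟨mc, hmc⟩ := poch_ratio_poly (f+1) 1 one_not_negnat
  obtain ⟨md, hmd⟩ := poch_ratio_poly (c-a-b-1) 1 one_not_negnat
  set MM := M1 + ma + mb + mc + md with hMM
  have hβne : ∀ k, (∏ l, poch (β l) k) ≠ 0 :=
    fun k => Finset.prod_ne_zero_iff.mpr (fun l _ => poch_ne_zero (hβ l) k)
  have hx0 : (0:ℝ) ≤ ‖x‖ := norm_nonneg x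
  -- the bounding function
  have hbnd : ∀ pr : ℕ × ℕ,
      ‖T pr‖ ≤ (((pr.1:ℝ)+(pr.2:ℝ)+1))^MM * ‖x‖^(pr.1+pr.2) := by
    rintro ⟨i, n⟩
    have key : ‖T (i,n)‖ =
        (‖∏ l, poch (α l) (i+n)‖/‖∏ l, poch (β l) (i+n)‖) *
        ((‖poch a i‖/‖poch c i‖) * (‖poch b i‖/‖poch f i‖) *
         (‖poch (f+1) i‖/(i.factorial:ℝ)) * (‖poch (c-a-b-1) n‖/(n.factorial:ℝ))) *
        ‖x‖^(i+n) := by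
      simp only [hT, norm_div, norm_mul, norm_pow, Complex.norm_natCast]
      ring
    have hBpos : (0:ℝ) < ‖∏ l, poch (β l) (i+n)‖ := norm_pos_iff.mpr (hβne (i+n))
    have hcpos : (0:ℝ) < ‖poch c i‖ := norm_pos_iff.mpr (poch_ne_zero hc i)
    have hfpos : (0:ℝ) < ‖poch f i‖ := norm_pos_iff.mpr (poch_ne_zero hf i)
    have hipos : (0:ℝ) < (i.factorial:ℝ) := by exact_mod_cast i.factorial_pos
    have hnpos : (0:ℝ) < (n.factorial:ℝ) := by exact_mod_cast n.factorial_pos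
    have b1 : ‖∏ l, poch (α l) (i+n)‖/‖∏ l, poch (β l) (i+n)‖ ≤ (((i+n : ℕ):ℝ)+1)^M1 :=
      (div_le_iff₀ hBpos).mpr (hM1 (i+n))
    have b2 : ‖poch a i‖/‖poch c i‖ ≤ (((i:ℕ):ℝ)+1)^ma := (div_le_iff₀ hcpos).mpr (hma i)
    have b3 : ‖poch b i‖/‖poch f i‖ ≤ (((i:ℕ):ℝ)+1)^mb := (div_le_iff₀ hfpos).mpr (hmb i)
    have b4 : ‖poch (f+1) i‖/(i.factorial:ℝ) ≤ (((i:ℕ):ℝ)+1)^mc := by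
      rw [div_le_iff₀ hipos]
      have := hmc i
      rwa [poch_one_eq_factorial, Complex.norm_natCast] at this
    have b5 : ‖poch (c-a-b-1) n‖/(n.factorial:ℝ) ≤ (((n:ℕ):ℝ)+1)^md := by
      rw [div_le_iff₀ hnpos]
      have := hmd n
      rwa [poch_one_eq_factorial, Complex.norm_natCast] at this
    have hkc : (((i+n : ℕ):ℝ)+1) = ((i:ℝ)+(n:ℝ)+1) := by push_cast; ring
    have hik : ((i:ℝ)+1) ≤ ((i:ℝ)+(n:ℝ)+1) := by
      have : (0:ℝ) ≤ (n:ℝ) := Nat.cast_nonneg n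
      linarith
    have hnk : ((n:ℝ)+1) ≤ ((i:ℝ)+(n:ℝ)+1) := by
      have : (0:ℝ) ≤ (i:ℝ) := Nat.cast_nonneg i
      linarith
    have hd0 : (0:ℝ) ≤ (i:ℝ)+(n:ℝ)+1 := by positivity
    calc ‖T (i,n)‖
        = (‖∏ l, poch (α l) (i+n)‖/‖∏ l, poch (β l) (i+n)‖) *
          ((‖poch a i‖/‖poch c i‖) * (‖poch b i‖/‖poch f i‖) *
           (‖poch (f+1) i‖/(i.factorial:ℝ)) * (‖poch (c-a-b-1) n‖/(n.factorial:ℝ))) *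
          ‖x‖^(i+n) := key
      _ ≤ ((((i+n : ℕ):ℝ)+1)^M1) *
          (((((i:ℕ):ℝ)+1)^ma) * ((((i:ℕ):ℝ)+1)^mb) * ((((i:ℕ):ℝ)+1)^mc) * ((((n:ℕ):ℝ)+1)^md)) *
          ‖x‖^(i+n) := by
          gcongr
      _ ≤ (((i:ℝ)+(n:ℝ)+1)^M1) *
          ((((i:ℝ)+(n:ℝ)+1)^ma) * (((i:ℝ)+(n:ℝ)+1)^mb) * (((i:ℝ)+(n:ℝ)+1)^mc) *
           (((i:ℝ)+(n:ℝ)+1)^md)) * ‖x‖^(i+n) := by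
          rw [hkc]
          gcongr <;> first | exact hik | exact hnk
      _ = (((i:ℝ)+(n:ℝ)+1))^MM * ‖x‖^(i+n) := by
          rw [hMM]
          rw [pow_add, pow_add, pow_add, pow_add]
          ring
  have hg : Summable (fun pr : ℕ×ℕ => (((pr.1:ℝ)+(pr.2:ℝ)+1))^MM * ‖x‖^(pr.1+pr.2)) := by
    have hone : Summable fun n:ℕ => ((n:ℝ)+1)^MM * ‖x‖^n := summable_poly_geom MM hx0 hx
    have hprod2 : Summable (fun pr : ℕ×ℕ =>
        (((pr.1:ℝ)+1)^MM * ‖x‖^pr.1) * (((pr.2:ℝ)+1)^MM * ‖x‖^pr.2)) :=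
      hone.mul_of_nonneg hone (fun n => by positivity) (fun n => by positivity)
    apply hprod2.of_nonneg_of_le (fun pr => by positivity)
    rintro ⟨i, n⟩
    have hbase : (i:ℝ)+(n:ℝ)+1 ≤ ((i:ℝ)+1)*((n:ℝ)+1) := by
      nlinarith [Nat.cast_nonneg (α := ℝ) i, Nat.cast_nonneg (α := ℝ) n]
    calc ((i:ℝ)+(n:ℝ)+1)^MM * ‖x‖^(i+n)
        ≤ (((i:ℝ)+1)*((n:ℝ)+1))^MM * ‖x‖^(i+n) := by
          gcongr
      _ = (((i:ℝ)+1)^MM * ‖x‖^i) * (((n:ℝ)+1)^MM * ‖x‖^n) := by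
          rw [mul_pow, pow_add]
          ring
  have hsum : Summable T :=
    Summable.of_norm_bounded hg hbnd
  -- rewrite iterated sum as sum over pairs
  have e0 : (∑' i : ℕ, ∑' n : ℕ,
        (∏ l, poch (α l) (i + n)) / (∏ l, poch (β l) (i + n)) *
          (poch a i * poch b i * poch (f + 1) i) * poch (c - a - b - 1) n * x ^ (i + n) /
            (poch c i * poch f i * (Nat.factorial i : ℂ) * (Nat.factorial n : ℂ)))
      = ∑' pr : ℕ × ℕ, T pr :=
    (Summable.tsum_prod' hsum (fun b => hsum.prod_factor b)).symm
  rw [e0]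
  have e1 : ∑' pr : ℕ × ℕ, T pr = ∑' σ : (Σ n : ℕ, Finset.HasAntidiagonal.antidiagonal n), T σ.2 :=
    (Finset.HasAntidiagonal.sigmaAntidiagonalEquivProd.tsum_eq T).symm
  rw [e1]
  have e2 : ∑' σ : (Σ n : ℕ, Finset.HasAntidiagonal.antidiagonal n), T σ.2
      = ∑' n : ℕ, ∑' kl : Finset.HasAntidiagonal.antidiagonal n, T kl :=
    Summable.tsum_sigma' (fun n => (hasSum_fintype _).summable)
      (Finset.HasAntidiagonal.sigmaAntidiagonalEquivProd.summable_iff.mpr hsum)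
  rw [e2]
  apply tsum_congr
  intro n
  rw [Finset.tsum_subtype (Finset.HasAntidiagonal.antidiagonal n) T,
    Finset.Nat.sum_antidiagonal_eq_sum_range_succ_mk]
  have e3 : ∀ i ∈ Finset.range (n+1), T (i, n - i)
      = ((∏ l, poch (α l) n) / (∏ l, poch (β l) n) * x ^ n) *
        (poch a i * poch b i * poch (f+1) i * poch (c-a-b-1) (n-i) /
          (poch c i * poch f i * (i.factorial : ℂ) * ((n-i).factorial : ℂ))) := by
    intro i hi
    rw [Finset.mem_range] at hi
    have hin : i + (n - i) = n := by omega
    simp only [hT, hin]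
    ring
  rw [Finset.sum_congr rfl e3, ← Finset.mul_sum,
    lemStar a b c f η hc hf hη' hden hη n]
  ring
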